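/- Let φ : A → B be a homomorphism of k-algebras and suppose the coradical of B^o is cocommutative. Then the induced coalgebra map φ* : B^o → A^o maps corad(B^o) into corad(A^o). -/

import Mathlib

variable (k : Type*) [Field k]

/-- `f ∈ A^o` : the kernel of `f` contains a two-sided ideal of finite codimension. -/
def memFiniteDual (A : Type*) [Ring A] [Algebra k A] (f : Module.Dual k A) : Prop :=
  ∃ I : Submodule k A, (∀ (a : A), ∀ x ∈ I, a * x ∈ I) ∧ (∀ (a : A), ∀ x ∈ I, x * a ∈ I) ∧
    FiniteDimensional k (A ⧸ I) ∧ ∀ x ∈ I, f x = 0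

/-- A subspace `D` of `A*` is a subcoalgebra of `A^o` : it consists of elements of `A^o`
and is closed under the comultiplication dual to the multiplication of `A`. -/
def IsSubcoalgebraOfDual (A : Type*) [Ring A] [Algebra k A]
    (D : Submodule k (Module.Dual k A)) : Prop :=
  (∀ f ∈ D, memFiniteDual k A f) ∧
  ∀ f ∈ D, ∃ (n : ℕ) (g h : Fin n → Module.Dual k A),
    (∀ i, g i ∈ D ∧ h i ∈ D) ∧ ∀ a b : A, f (a * b) = ∑ i, g i a * h i b

/-- The coradical of `A^o` : the sum of all simple subcoalgebras of `A^o`. -/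
def coradicalOfDual (A : Type*) [Ring A] [Algebra k A] : Submodule k (Module.Dual k A) :=
  sSup {D | IsSubcoalgebraOfDual k A D ∧ D ≠ ⊥ ∧
    ∀ D' ≤ D, IsSubcoalgebraOfDual k A D' → D' = ⊥ ∨ D' = D}
section AuxHelpers

variable {k : Type*} [Field k] {B : Type*} [Ring B] [Algebra k B]

/-- The coannihilator of a subcoalgebra of the finite dual is a two-sided ideal. -/
theorem aux_coann_two_sided {D : Submodule k (Module.Dual k B)}
    (hD : IsSubcoalgebraOfDual k B D) :
    (∀ a : B, ∀ x ∈ D.dualCoannihilator, a * x ∈ D.dualCoannihilator) ∧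
    (∀ a : B, ∀ x ∈ D.dualCoannihilator, x * a ∈ D.dualCoannihilator) := by
  constructor <;>
  · intro a x hx
    rw [Submodule.mem_dualCoannihilator] at hx ⊢
    intro g hg
    obtain ⟨n, u, v, huv, hdec⟩ := hD.2 g hg
    rw [hdec]
    refine Finset.sum_eq_zero fun i _ => ?_
    first
    | rw [hx (v i) (huv i).2, mul_zero]
    | rw [hx (u i) (huv i).1, zero_mul]

theorem aux_eq_top_of_one_mem {I : Submodule k B}
    (hl : ∀ a : B, ∀ x ∈ I, a * x ∈ I) (h1 : (1 : B) ∈ I) : I = ⊤ := by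
  rw [Submodule.eq_top_iff']
  intro a
  simpa using hl a 1 h1

theorem aux_dualAnnihilator_anti {I J : Submodule k B} (h : I ≤ J) :
    J.dualAnnihilator ≤ I.dualAnnihilator := by
  intro f hf
  rw [Submodule.mem_dualAnnihilator] at hf ⊢
  exact fun x hx => hf x (h hx)

theorem aux_dualCoannihilator_anti {D E : Submodule k (Module.Dual k B)} (h : D ≤ E) :
    E.dualCoannihilator ≤ D.dualCoannihilator := by
  intro x hx
  rw [Submodule.mem_dualCoannihilator] at hx ⊢
  exact fun f hf => hx f (h hf)

theorem aux_dualAnnihilator_ne_bot {I : Submodule k B} (h : I ≠ ⊤) : I.dualAnnihilator ≠ ⊥ := by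
  intro hc
  apply h
  have := congrArg Submodule.dualCoannihilator hc
  rwa [Subspace.dualAnnihilator_dualCoannihilator_eq, Submodule.dualCoannihilator_bot] at this

theorem aux_dualAnnihilator_top : (⊤ : Submodule k B).dualAnnihilator = ⊥ := by
  rw [Submodule.eq_bot_iff]
  intro f hf
  rw [Submodule.mem_dualAnnihilator] at hf
  ext x
  simp [hf x trivial]

/-- A quotient by a larger submodule of a finite-codimension submodule is
finite-dimensional. -/
theorem aux_quot_findim_of_le {I K : Submodule k B} (h : I ≤ K)
    [FiniteDimensional k (B ⧸ I)] : FiniteDimensional k (B ⧸ K) := by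
  have hs : Function.Surjective (Submodule.mapQ I K LinearMap.id h) := by
    intro z
    obtain ⟨b, rfl⟩ := Submodule.Quotient.mk_surjective K z
    exact ⟨Submodule.Quotient.mk b, by rw [Submodule.mapQ_apply]; rfl⟩
  exact Module.Finite.of_surjective _ hs

/-- The annihilator of a two-sided ideal of finite codimension is a subcoalgebra
of the finite dual. -/
theorem aux_dualAnnihilator_isSubcoalgebra {I : Submodule k B}
    (hl : ∀ a : B, ∀ x ∈ I, a * x ∈ I) (hr : ∀ a : B, ∀ x ∈ I, x * a ∈ I)
    [hfd : FiniteDimensional k (B ⧸ I)] :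
    IsSubcoalgebraOfDual k B I.dualAnnihilator := by
  constructor
  · intro f hf
    rw [Submodule.mem_dualAnnihilator] at hf
    exact ⟨I, hl, hr, hfd, hf⟩
  intro f hf
  rw [Submodule.mem_dualAnnihilator] at hf
  classical
  let bas := Module.finBasis k (B ⧸ I)
  set n := Module.finrank k (B ⧸ I)
  choose e he using fun i : Fin n => Submodule.Quotient.mk_surjective I (bas i)
  refine ⟨n, fun i => f ∘ₗ LinearMap.mulRight k (e i),
    fun i => (bas.coord i) ∘ₗ I.mkQ, fun i => ⟨?_, ?_⟩, ?_⟩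
  · rw [Submodule.mem_dualAnnihilator]
    intro x hx
    exact hf _ (hr (e i) x hx)
  · rw [Submodule.mem_dualAnnihilator]
    intro x hx
    have : I.mkQ x = 0 := (Submodule.Quotient.mk_eq_zero I).2 hx
    simp [this]
  · intro a b
    have hb : b - ∑ i, bas.repr (Submodule.Quotient.mk b) i • e i ∈ I := by
      rw [← Submodule.Quotient.mk_eq_zero I]
      have : (Submodule.Quotient.mk (∑ i, bas.repr (Submodule.Quotient.mk b) i • e i) : B ⧸ I)
          = ∑ i, bas.repr (Submodule.Quotient.mk b) i • bas i := by
        rw [← Submodule.mkQ_apply, map_sum]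
        simp [he]
      rw [Submodule.Quotient.mk_sub, this, bas.sum_repr (Submodule.Quotient.mk b), sub_self]
    have key : f (a * b) = f (a * ∑ i, bas.repr (Submodule.Quotient.mk b) i • e i) := by
      have h0 : a * b - a * ∑ i, bas.repr (Submodule.Quotient.mk b) i • e i ∈ I := by
        rw [← mul_sub]
        exact hl a _ hb
      have := hf _ h0
      rw [map_sub, sub_eq_zero] at this
      exact this
    rw [key, Finset.mul_sum]
    simp only [mul_smul_comm, map_sum, map_smul, LinearMap.coe_comp, Function.comp_apply,
      LinearMap.mulRight_apply, Submodule.mkQ_apply, smul_eq_mul]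
    refine Finset.sum_congr rfl fun i _ => ?_
    rw [Module.Basis.coord_apply, mul_comm]

end AuxHelpers
section AuxLocal

variable {k : Type*} [Field k] {B : Type*} [Ring B] [Algebra k B]

noncomputable section

/-- The bilinear family of two-sided translates of `f` : `Psi f x y = (b ↦ f (x * b * y))`. -/
def Psi (f : Module.Dual k B) : B →ₗ[k] B →ₗ[k] Module.Dual k B :=
  LinearMap.mk₂ k (fun x y => f ∘ₗ LinearMap.mulRight k y ∘ₗ LinearMap.mulLeft k x)
    (fun x x' y => by ext b; simp [add_mul, mul_add])
    (fun c x y => by ext b; simp [smul_mul_assoc, mul_smul_comm])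
    (fun x y y' => by ext b; simp [mul_add])
    (fun c x y => by ext b; simp [mul_smul_comm])

@[simp] theorem Psi_apply (f : Module.Dual k B) (x y b : B) :
    Psi f x y b = f (x * b * y) := rfl

theorem Psi_left_zero {f : Module.Dual k B} {I : Submodule k B}
    (hr : ∀ a : B, ∀ x ∈ I, x * a ∈ I) (hv : ∀ x ∈ I, f x = 0)
    {x : B} (hx : x ∈ I) (y : B) : Psi f x y = 0 := by
  ext b
  simp only [Psi_apply, LinearMap.zero_apply]
  exact hv _ (hr y _ (hr b x hx))

theorem Psi_right_zero {f : Module.Dual k B} {I : Submodule k B}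
    (hl : ∀ a : B, ∀ x ∈ I, a * x ∈ I) (hv : ∀ x ∈ I, f x = 0)
    (x : B) {y : B} (hy : y ∈ I) : Psi f x y = 0 := by
  ext b
  simp only [Psi_apply, LinearMap.zero_apply]
  exact hv _ (hl (x * b) y hy)

end

noncomputable section
open Submodule

variable (f : Module.Dual k B) (I : Submodule k B)

/-- The span of two-sided translates at a fixed finite lifting family. -/
def Wspan (e : Fin n → B) : Submodule k (Module.Dual k B) :=
  Submodule.span k (Set.range fun p : Fin n × Fin n => Psi f (e p.1) (e p.2))

theorem mem_Wspan
    (hl : ∀ a : B, ∀ x ∈ I, a * x ∈ I) (hr : ∀ a : B, ∀ x ∈ I, x * a ∈ I)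
    (hv : ∀ x ∈ I, f x = 0) [FiniteDimensional k (B ⧸ I)]
    (bas : Module.Basis (Fin n) k (B ⧸ I)) (e : Fin n → B)
    (he : ∀ i, Submodule.Quotient.mk (e i) = bas i) (x y : B) :
    Psi f x y ∈ Wspan f e := by
  classical
  set c := fun z : B => fun i => bas.repr (Submodule.Quotient.mk z) i with hc
  have hz : ∀ z : B, z - ∑ i, c z i • e i ∈ I := by
    intro z
    rw [← Submodule.Quotient.mk_eq_zero I]
    have : (Submodule.Quotient.mk (∑ i, c z i • e i) : B ⧸ I) = ∑ i, c z i • bas i := by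
      rw [← Submodule.mkQ_apply, map_sum]; simp [he]
    rw [Submodule.Quotient.mk_sub, this, hc]
    rw [bas.sum_repr (Submodule.Quotient.mk z), sub_self]
  have e1 : Psi f x y = Psi f (∑ i, c x i • e i) y := by
    have h := Psi_left_zero hr hv (hz x) y
    rw [map_sub] at h
    simpa [sub_eq_zero] using h
  have e2 : Psi f (∑ i, c x i • e i) y = Psi f (∑ i, c x i • e i) (∑ j, c y j • e j) := by
    have h := Psi_right_zero hl hv (∑ i, c x i • e i) (hz y)
    rw [map_sub] at h
    simpa [sub_eq_zero] using h
  rw [e1, e2]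
  simp only [map_sum, map_smul, LinearMap.sum_apply, LinearMap.smul_apply]
  refine Submodule.sum_mem _ fun i _ => Submodule.smul_mem _ _ ?_
  refine Submodule.sum_mem _ fun j _ => Submodule.smul_mem _ _ ?_
  exact Submodule.subset_span ⟨(j, i), rfl⟩

end

noncomputable section
open Submodule

theorem dualMap_mulLeft_Psi (f : Module.Dual k B) (a x y : B) :
    (LinearMap.mulLeft k a).dualMap (Psi f x y) = Psi f (x * a) y := by
  ext b; simp [mul_assoc]

theorem dualMap_mulRight_Psi (f : Module.Dual k B) (c x y : B) :
    (LinearMap.mulRight k c).dualMap (Psi f x y) = Psi f x (c * y) := by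
  ext b; simp [mul_assoc]

theorem Wspan_mulLeft_closed {n : ℕ} (f : Module.Dual k B) (I : Submodule k B)
    (hl : ∀ a : B, ∀ x ∈ I, a * x ∈ I) (hr : ∀ a : B, ∀ x ∈ I, x * a ∈ I)
    (hv : ∀ x ∈ I, f x = 0) [FiniteDimensional k (B ⧸ I)]
    (bas : Module.Basis (Fin n) k (B ⧸ I)) (e : Fin n → B)
    (he : ∀ i, Submodule.Quotient.mk (e i) = bas i)
    (a : B) {w : Module.Dual k B} (hw : w ∈ Wspan f e) :
    (LinearMap.mulLeft k a).dualMap w ∈ Wspan f e := by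
  have : Submodule.map (LinearMap.mulLeft k a).dualMap (Wspan f e) ≤ Wspan f e := by
    rw [Wspan, Submodule.map_span, Submodule.span_le]
    rintro _ ⟨_, ⟨p, rfl⟩, rfl⟩
    rw [dualMap_mulLeft_Psi]
    exact mem_Wspan f I hl hr hv bas e he _ _
  exact this (Submodule.mem_map_of_mem hw)

theorem Wspan_mulRight_closed {n : ℕ} (f : Module.Dual k B) (I : Submodule k B)
    (hl : ∀ a : B, ∀ x ∈ I, a * x ∈ I) (hr : ∀ a : B, ∀ x ∈ I, x * a ∈ I)
    (hv : ∀ x ∈ I, f x = 0) [FiniteDimensional k (B ⧸ I)]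
    (bas : Module.Basis (Fin n) k (B ⧸ I)) (e : Fin n → B)
    (he : ∀ i, Submodule.Quotient.mk (e i) = bas i)
    (c : B) {w : Module.Dual k B} (hw : w ∈ Wspan f e) :
    (LinearMap.mulRight k c).dualMap w ∈ Wspan f e := by
  have : Submodule.map (LinearMap.mulRight k c).dualMap (Wspan f e) ≤ Wspan f e := by
    rw [Wspan, Submodule.map_span, Submodule.span_le]
    rintro _ ⟨_, ⟨p, rfl⟩, rfl⟩
    rw [dualMap_mulRight_Psi]
    exact mem_Wspan f I hl hr hv bas e he _ _
  exact this (Submodule.mem_map_of_mem hw)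

end

section
open Submodule

theorem Psi_mem_subcoalgebra {D : Submodule k (Module.Dual k B)}
    (hD2 : ∀ f ∈ D, ∃ (n : ℕ) (g h : Fin n → Module.Dual k B),
      (∀ i, g i ∈ D ∧ h i ∈ D) ∧ ∀ a b : B, f (a * b) = ∑ i, g i a * h i b)
    {f : Module.Dual k B} (hf : f ∈ D) (x y : B) : Psi f x y ∈ D := by
  classical
  obtain ⟨m, u, v, huv, hdec⟩ := hD2 f hf
  choose m2 uu vv huv2 hdec2 using fun p : Fin m => hD2 (u p) (huv p).1
  have key : Psi f x y = ∑ p : Fin m, ∑ q : Fin (m2 p), ((uu p q x) * (v p y)) • vv p q := by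
    ext b
    simp only [Psi_apply, LinearMap.sum_apply, LinearMap.smul_apply, smul_eq_mul]
    rw [hdec (x * b) y]
    refine Finset.sum_congr rfl fun p _ => ?_
    rw [hdec2 p x b, Finset.sum_mul]
    refine Finset.sum_congr rfl fun q _ => ?_
    ring
  rw [key]
  exact Submodule.sum_mem _ fun p _ => Submodule.sum_mem _ fun q _ =>
    Submodule.smul_mem _ _ (huv2 p q).2

end

section
open Submodule

set_option synthInstance.maxHeartbeats 1000000 in
theorem flip_subtype_surjective (W : Submodule k (Module.Dual k B)) [FiniteDimensional k W] :
    Function.Surjective ((LinearMap.flip W.subtype : B →ₗ[k] Module.Dual k W)) := by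
  rw [← LinearMap.range_eq_top]
  set ev : B →ₗ[k] Module.Dual k W := LinearMap.flip W.subtype with hev
  set R : Submodule k (Module.Dual k ↥W) := LinearMap.range ev with hR
  have hco : R.dualCoannihilator = ⊥ := by
    rw [Submodule.eq_bot_iff]
    intro w hw
    rw [Submodule.mem_dualCoannihilator] at hw
    ext b
    simpa [hev] using hw _ ⟨b, rfl⟩
  haveI : Module.Free k ↥W := Module.Free.of_divisionRing k ↥W
  haveI : FiniteDimensional k (Module.Dual k ↥W) := (Module.finite_dual_iff k (V := ↥W)).mpr inferInstance
  haveI : FiniteDimensional k ↥R := FiniteDimensional.finiteDimensional_submodule R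
  have := Subspace.dualCoannihilator_dualAnnihilator_eq (K := k) (V := ↥W) (W := R)
  rw [hco, Submodule.dualAnnihilator_bot] at this
  exact this.symm

end

open Submodule in
theorem exists_findim_subcoalgebra {D : Submodule k (Module.Dual k B)}
    (hD : IsSubcoalgebraOfDual k B D) {f : Module.Dual k B} (hf : f ∈ D) :
    ∃ W : Submodule k (Module.Dual k B), W ≤ D ∧ IsSubcoalgebraOfDual k B W ∧
      FiniteDimensional k W ∧ f ∈ W := by
  classical
  obtain ⟨I, hl, hr, hfd, hv⟩ := hD.1 f hf
  haveI := hfd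
  set bas : Module.Basis (Fin (Module.finrank k (B ⧸ I))) k (B ⧸ I) := Module.finBasis k (B ⧸ I)
    with hbas
  choose e he using fun i => Submodule.Quotient.mk_surjective I (bas i)
  have hWD : Wspan f e ≤ D := by
    rw [Wspan, Submodule.span_le]
    rintro _ ⟨p, rfl⟩
    exact Psi_mem_subcoalgebra hD.2 hf _ _
  haveI hWfd : FiniteDimensional k (Wspan f e) := by
    rw [Wspan]
    exact FiniteDimensional.span_of_finite k (Set.finite_range _)
  have hfW : f ∈ Wspan f e := by
    have h0 := mem_Wspan f I hl hr hv bas e he 1 1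
    rwa [show Psi f 1 1 = f by ext b; simp] at h0
  refine ⟨Wspan f e, hWD, ⟨fun w hw => hD.1 w (hWD hw), ?_⟩, hWfd, hfW⟩
  intro w hw
  set W := Wspan f e with hW
  haveI : Module.Free k ↥W := Module.Free.of_divisionRing k ↥W
  set basW : Module.Basis (Fin (Module.finrank k W)) k W := Module.finBasis k W with hbasW
  choose bb hbb using fun j => flip_subtype_surjective W (basW.coord j)
  refine ⟨Module.finrank k W, fun j => (LinearMap.mulRight k (bb j)).dualMap w,
    fun j => (basW j : Module.Dual k B), fun j =>
      ⟨Wspan_mulRight_closed f I hl hr hv bas e he (bb j) hw, (basW j).2⟩, ?_⟩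
  · intro a b'
    set wa : W := ⟨(LinearMap.mulLeft k a).dualMap w,
      Wspan_mulLeft_closed f I hl hr hv bas e he a hw⟩ with hwa
    have hcoord : ∀ j, basW.repr wa j = w (a * bb j) := by
      intro j
      have h1 : basW.coord j wa = (LinearMap.flip W.subtype) (bb j) wa := by rw [hbb j]
      rw [Module.Basis.coord_apply] at h1
      rw [h1]
      simp [hwa]
    calc w (a * b') = (wa : Module.Dual k B) b' := by simp [hwa]
      _ = ((∑ j, basW.repr wa j • basW j : W) : Module.Dual k B) b' := by
          rw [basW.sum_repr wa]
      _ = ∑ j, basW.repr wa j • ((basW j : Module.Dual k B) b') := by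
          rw [Submodule.coe_sum]
          simp
      _ = ∑ j, ((LinearMap.mulRight k (bb j)).dualMap w) a * (basW j : Module.Dual k B) b' := by
          refine Finset.sum_congr rfl fun j _ => ?_
          rw [hcoord j, smul_eq_mul, LinearMap.dualMap_apply, LinearMap.mulRight_apply]

end AuxLocal
section AuxMain

variable {k : Type*} [Field k] {A B : Type*} [Ring A] [Algebra k A] [Ring B] [Algebra k B]

/-- The image of a subcoalgebra of `B^o` under the dual of an algebra map is a
subcoalgebra of `A^o`. -/
theorem aux_map_isSubcoalgebra (φ : A →ₐ[k] B) {D : Submodule k (Module.Dual k B)}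
    (hD : IsSubcoalgebraOfDual k B D) :
    IsSubcoalgebraOfDual k A (D.map φ.toLinearMap.dualMap) := by
  constructor
  · rintro _ ⟨g, hg, rfl⟩
    obtain ⟨I, hl, hr, hfd, hv⟩ := hD.1 g hg
    refine ⟨I.comap φ.toLinearMap, ?_, ?_, ?_, ?_⟩
    · intro a x hx
      simp only [Submodule.mem_comap, AlgHom.toLinearMap_apply, map_mul] at hx ⊢
      exact hl (φ a) _ hx
    · intro a x hx
      simp only [Submodule.mem_comap, AlgHom.toLinearMap_apply, map_mul] at hx ⊢
      exact hr (φ a) _ hx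
    · set J := I.comap φ.toLinearMap
      have hle : J ≤ LinearMap.ker (I.mkQ ∘ₗ φ.toLinearMap) := by
        intro x hx
        simp only [LinearMap.mem_ker, LinearMap.coe_comp, Function.comp_apply,
          Submodule.mkQ_apply, Submodule.Quotient.mk_eq_zero]
        exact hx
      have hinj : Function.Injective (J.liftQ (I.mkQ ∘ₗ φ.toLinearMap) hle) := by
        rw [← LinearMap.ker_eq_bot, Submodule.ker_liftQ_eq_bot]
        intro x hx
        simp only [LinearMap.mem_ker, LinearMap.coe_comp, Function.comp_apply,
          Submodule.mkQ_apply, Submodule.Quotient.mk_eq_zero] at hx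
        exact hx
      exact FiniteDimensional.of_injective _ hinj
    · intro x hx
      exact hv _ hx
  · rintro _ ⟨g, hg, rfl⟩
    obtain ⟨n, u, v, huv, hdec⟩ := hD.2 g hg
    refine ⟨n, fun i => φ.toLinearMap.dualMap (u i), fun i => φ.toLinearMap.dualMap (v i),
      fun i => ⟨Submodule.mem_map_of_mem (huv i).1, Submodule.mem_map_of_mem (huv i).2⟩, ?_⟩
    intro a b
    simp only [LinearMap.dualMap_apply, AlgHom.toLinearMap_apply, map_mul]
    exact hdec (φ a) (φ b)

/-- In the presence of cocommutativity and simplicity, every element of `B` outside the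
coannihilator ideal of `D` is left-invertible modulo that ideal. -/
theorem aux_exists_inv_mod {D : Submodule k (Module.Dual k B)}
    (hDsc : IsSubcoalgebraOfDual k B D)
    (hsimple : ∀ D' ≤ D, IsSubcoalgebraOfDual k B D' → D' = ⊥ ∨ D' = D)
    [hDfd : FiniteDimensional k D]
    (hcomm : ∀ x y : B, x * y - y * x ∈ D.dualCoannihilator)
    {x : B} (hx : x ∉ D.dualCoannihilator) :
    ∃ y : B, 1 - y * x ∈ D.dualCoannihilator := by
  classical
  set J := D.dualCoannihilator with hJ
  obtain ⟨hJl, hJr⟩ := aux_coann_two_sided hDsc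
  haveI hBJ : FiniteDimensional k (B ⧸ J) :=
    Subspace.finiteDimensional_quot_dualCoannihilator_iff.mpr hDfd
  set K := (J ⊔ LinearMap.range (LinearMap.mulRight k x)) ⊔ Submodule.span k {x} with hK
  have hJK : J ≤ K := le_sup_of_le_left le_sup_left
  have hxK : x ∈ K := Submodule.mem_sup_right (Submodule.mem_span_singleton_self x)
  have hKl : ∀ a : B, ∀ t ∈ K, a * t ∈ K := by
    intro a t ht
    have hsub : K ≤ Submodule.comap (LinearMap.mulLeft k a) K := by
      refine sup_le (sup_le ?_ ?_) ?_
      · intro j hj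
        simp only [Submodule.mem_comap, LinearMap.mulLeft_apply]
        exact hJK (hJl a j hj)
      · rintro _ ⟨b, rfl⟩
        simp only [Submodule.mem_comap, LinearMap.mulLeft_apply, LinearMap.mulRight_apply]
        rw [← mul_assoc]
        exact Submodule.mem_sup_left (Submodule.mem_sup_right ⟨a * b, rfl⟩)
      · rw [Submodule.span_singleton_le_iff_mem]
        simp only [Submodule.mem_comap, LinearMap.mulLeft_apply]
        exact Submodule.mem_sup_left (Submodule.mem_sup_right ⟨a, rfl⟩)
    simpa using hsub ht
  have hKr : ∀ a : B, ∀ t ∈ K, t * a ∈ K := by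
    intro a t ht
    have hsub : K ≤ Submodule.comap (LinearMap.mulRight k a) K := by
      refine sup_le (sup_le ?_ ?_) ?_
      · intro j hj
        simp only [Submodule.mem_comap, LinearMap.mulRight_apply]
        exact hJK (hJr a j hj)
      · rintro _ ⟨b, rfl⟩
        simp only [Submodule.mem_comap, LinearMap.mulRight_apply]
        have hd : b * x * a = b * a * x + b * (x * a - a * x) := by noncomm_ring
        rw [hd]
        refine Submodule.add_mem _ ?_ ?_
        · exact Submodule.mem_sup_left (Submodule.mem_sup_right ⟨b * a, rfl⟩)
        · exact hJK (hJl b _ (hcomm x a))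
      · rw [Submodule.span_singleton_le_iff_mem]
        simp only [Submodule.mem_comap, LinearMap.mulRight_apply]
        have hd : x * a = a * x + (x * a - a * x) := by noncomm_ring
        rw [hd]
        refine Submodule.add_mem _ ?_ ?_
        · exact Submodule.mem_sup_left (Submodule.mem_sup_right ⟨a, rfl⟩)
        · exact hJK (hcomm x a)
    simpa using hsub ht
  haveI : FiniteDimensional k (B ⧸ K) := aux_quot_findim_of_le hJK
  by_cases hKtop : K = ⊤
  · have h1 : (1 : B) ∈ (J ⊔ LinearMap.range (LinearMap.mulRight k x)) ⊔ Submodule.span k {x} :=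
      by rw [← hK, hKtop]; trivial
    rw [Submodule.mem_sup] at h1
    obtain ⟨s, hs, t, ht, hst⟩ := h1
    rw [Submodule.mem_sup] at hs
    obtain ⟨j, hj, u, hu, hju⟩ := hs
    obtain ⟨b, rfl⟩ := hu
    rw [Submodule.mem_span_singleton] at ht
    obtain ⟨c, rfl⟩ := ht
    refine ⟨b + c • 1, ?_⟩
    have he : 1 - (b + c • 1) * x = j := by
      rw [add_mul, smul_mul_assoc, one_mul, ← hst, ← hju]
      simp only [LinearMap.mulRight_apply]
      abel
    rw [he]
    exact hj
  · exfalso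
    have hann_sc : IsSubcoalgebraOfDual k B K.dualAnnihilator :=
      aux_dualAnnihilator_isSubcoalgebra hKl hKr
    have hann_le : K.dualAnnihilator ≤ D := by
      have h0 := aux_dualAnnihilator_anti hJK
      rwa [hJ, Subspace.dualCoannihilator_dualAnnihilator_eq] at h0
    rcases hsimple _ hann_le hann_sc with h | h
    · exact aux_dualAnnihilator_ne_bot hKtop h
    · rw [hJ, Submodule.mem_dualCoannihilator] at hx
      push_neg at hx
      obtain ⟨g, hgD, hgx⟩ := hx
      rw [← h, Submodule.mem_dualAnnihilator] at hgD
      exact hgx (hgD x hxK)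

/-- Modulo the coannihilator ideal of a simple cocommutative subcoalgebra,
there are no zero divisors. -/
theorem aux_mul_not_mem {D : Submodule k (Module.Dual k B)}
    (hDsc : IsSubcoalgebraOfDual k B D)
    (hsimple : ∀ D' ≤ D, IsSubcoalgebraOfDual k B D' → D' = ⊥ ∨ D' = D)
    [hDfd : FiniteDimensional k D]
    (hcomm : ∀ x y : B, x * y - y * x ∈ D.dualCoannihilator)
    (h1 : (1 : B) ∉ D.dualCoannihilator)
    {x y : B} (hx : x ∉ D.dualCoannihilator) (hy : y ∉ D.dualCoannihilator) :
    x * y ∉ D.dualCoannihilator := by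
  intro hxy
  obtain ⟨x', hx'⟩ := aux_exists_inv_mod hDsc hsimple hcomm hx
  obtain ⟨y', hy'⟩ := aux_exists_inv_mod hDsc hsimple hcomm hy
  set J := D.dualCoannihilator with hJ
  obtain ⟨hJl, hJr⟩ := aux_coann_two_sided hDsc
  apply h1
  have key : (1 : B) = ((1 - y' * y) + (1 - x' * x) * (y' * y))
      + x' * (x * y' - y' * x) * y + x' * y' * (x * y) := by noncomm_ring
  rw [key]
  refine Submodule.add_mem _ (Submodule.add_mem _ ?_ ?_) ?_
  · exact Submodule.add_mem _ hy' (hJr (y' * y) _ hx')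
  · exact hJr y _ (hJl x' _ (hcomm x y'))
  · exact hJl (x' * y') _ hxy

end AuxMain

set_option maxHeartbeats 1600000

/-- If `φ : A → B` is a `k`-algebra homomorphism and the coradical of `B^o` is
cocommutative (i.e. `g(xy) = g(yx)` for every `g` in it), then the induced coalgebra map
`φ* : B^o → A^o` maps `corad(B^o)` into `corad(A^o)`. -/
theorem dual_map_maps_cocommutative_coradical_into_coradical
    (A B : Type*) [Ring A] [Algebra k A] [Ring B] [Algebra k B] (φ : A →ₐ[k] B)
    (hcocomm : ∀ g ∈ coradicalOfDual k B, ∀ x y : B, g (x * y) = g (y * x)) :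
    ∀ g ∈ coradicalOfDual k B, (g ∘ₗ φ.toLinearMap) ∈ coradicalOfDual k A := by
  classical
  set SB := {D : Submodule k (Module.Dual k B) | IsSubcoalgebraOfDual k B D ∧ D ≠ ⊥ ∧
    ∀ D' ≤ D, IsSubcoalgebraOfDual k B D' → D' = ⊥ ∨ D' = D} with hSB
  have hcorB : coradicalOfDual k B = sSup SB := by rw [coradicalOfDual, hSB]
  have key : ∀ D ∈ SB, Submodule.map φ.toLinearMap.dualMap D ≤ coradicalOfDual k A := by
    intro D hDmem
    obtain ⟨hDsc, hDne, hDsimple⟩ := hDmem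
    by_cases hE : Submodule.map φ.toLinearMap.dualMap D = ⊥
    · rw [hE]; exact bot_le
    have hDle_corad : D ≤ coradicalOfDual k B := by
      rw [hcorB]
      exact le_sSup ⟨hDsc, hDne, hDsimple⟩
    haveI hDfd : FiniteDimensional k D := by
      obtain ⟨f₀, hf₀D, hf₀⟩ := Submodule.exists_mem_ne_zero_of_ne_bot hDne
      obtain ⟨W, hWle, hWsc, hWfd, hfW⟩ := exists_findim_subcoalgebra hDsc hf₀D
      rcases hDsimple W hWle hWsc with h | h
      · exact absurd (h ▸ hfW) (by simp [hf₀])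
      · rwa [h] at hWfd
    obtain ⟨hJBl, hJBr⟩ := aux_coann_two_sided hDsc
    have hJBcomm : ∀ x y : B, x * y - y * x ∈ D.dualCoannihilator := by
      intro x y
      rw [Submodule.mem_dualCoannihilator]
      intro g hg
      rw [map_sub, hcocomm g (hDle_corad hg) x y, sub_self]
    have h1JB : (1 : B) ∉ D.dualCoannihilator := by
      intro h1
      apply hDne
      have htop : D.dualCoannihilator = ⊤ := aux_eq_top_of_one_mem hJBl h1
      rw [Submodule.eq_bot_iff]
      intro g hg
      ext b
      have hb : b ∈ D.dualCoannihilator := htop ▸ Submodule.mem_top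
      rw [Submodule.mem_dualCoannihilator] at hb
      simpa using hb g hg
    set E := Submodule.map φ.toLinearMap.dualMap D with hEdef
    have hEsc : IsSubcoalgebraOfDual k A E := aux_map_isSubcoalgebra φ hDsc
    haveI hEfd : FiniteDimensional k E := inferInstance
    have hJA : ∀ a : A, a ∈ E.dualCoannihilator ↔ φ a ∈ D.dualCoannihilator := by
      intro a
      rw [Submodule.mem_dualCoannihilator, Submodule.mem_dualCoannihilator]
      constructor
      · intro h g hg
        have := h (φ.toLinearMap.dualMap g) (Submodule.mem_map_of_mem hg)
        simpa using this
      · rintro h _ ⟨g, hg, rfl⟩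
        simpa using h g hg
    obtain ⟨hJAl, hJAr⟩ := aux_coann_two_sided hEsc
    haveI : FiniteDimensional k (A ⧸ E.dualCoannihilator) :=
      Subspace.finiteDimensional_quot_dualCoannihilator_iff.mpr hEfd
    have hEann : E.dualCoannihilator.dualAnnihilator = E :=
      Subspace.dualCoannihilator_dualAnnihilator_eq
    rw [coradicalOfDual]
    refine le_sSup ⟨hEsc, hE, ?_⟩
    intro D' hD'le hD'sc
    by_cases hD'bot : D' = ⊥
    · left; exact hD'bot
    right
    haveI : FiniteDimensional k D' := Submodule.finiteDimensional_of_le hD'le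
    have hD'ann : D'.dualCoannihilator.dualAnnihilator = D' :=
      Subspace.dualCoannihilator_dualAnnihilator_eq
    have hJle : E.dualCoannihilator ≤ D'.dualCoannihilator := aux_dualCoannihilator_anti hD'le
    have hco_eq : D'.dualCoannihilator = E.dualCoannihilator := by
      refine le_antisymm ?_ hJle
      by_contra hne
      obtain ⟨x, hxJ', hxJA⟩ := SetLike.not_le_iff_exists.mp hne
      have hmul : E.dualCoannihilator ≤
          Submodule.comap (LinearMap.mulRight k x) E.dualCoannihilator := by
        intro a ha
        simp only [Submodule.mem_comap, LinearMap.mulRight_apply]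
        exact hJAr x a ha
      set T := Submodule.mapQ E.dualCoannihilator E.dualCoannihilator
        (LinearMap.mulRight k x) hmul with hT
      have hTinj : Function.Injective T := by
        rw [← LinearMap.ker_eq_bot, Submodule.eq_bot_iff]
        intro z hz
        obtain ⟨a, rfl⟩ := Submodule.Quotient.mk_surjective E.dualCoannihilator z
        rw [LinearMap.mem_ker, hT, Submodule.mapQ_apply, LinearMap.mulRight_apply,
          Submodule.Quotient.mk_eq_zero] at hz
        rw [Submodule.Quotient.mk_eq_zero]
        rw [hJA] at hz ⊢
        rw [map_mul] at hz
        by_contra hfa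
        have hfx : φ x ∉ D.dualCoannihilator := by
          rw [← hJA]; exact hxJA
        exact aux_mul_not_mem hDsc hDsimple hJBcomm h1JB hfa hfx hz
      have hTsurj : Function.Surjective T := (LinearMap.injective_iff_surjective).mp hTinj
      obtain ⟨z, hz⟩ := hTsurj (Submodule.Quotient.mk 1)
      obtain ⟨y, rfl⟩ := Submodule.Quotient.mk_surjective E.dualCoannihilator z
      rw [hT, Submodule.mapQ_apply, LinearMap.mulRight_apply] at hz
      have hyx : y * x - 1 ∈ E.dualCoannihilator := (Submodule.Quotient.eq _).mp hz
      have h1' : (1 : A) ∈ D'.dualCoannihilator := by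
        have hmem : y * x ∈ D'.dualCoannihilator := (aux_coann_two_sided hD'sc).1 y x hxJ'
        have hsub := Submodule.sub_mem _ hmem (hJle hyx)
        simpa using hsub
      apply absurd _ hD'bot
      have htop : D'.dualCoannihilator = ⊤ :=
        aux_eq_top_of_one_mem (aux_coann_two_sided hD'sc).1 h1'
      rw [← hD'ann, htop, aux_dualAnnihilator_top]
    rw [← hD'ann, hco_eq, hEann]
  intro g hg
  have hgoal : φ.toLinearMap.dualMap g ∈ coradicalOfDual k A := by
    rw [hcorB, sSup_eq_iSup'] at hg
    refine Submodule.iSup_induction (fun D : SB => (D : Submodule k (Module.Dual k B)))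
      (motive := fun x => φ.toLinearMap.dualMap x ∈ coradicalOfDual k A) hg ?_ ?_ ?_
    · intro D x hx
      exact key D.1 D.2 (Submodule.mem_map_of_mem hx)
    · show φ.toLinearMap.dualMap 0 ∈ coradicalOfDual k A
      rw [map_zero]
      exact Submodule.zero_mem _
    · intro x y hx hy
      show φ.toLinearMap.dualMap (x + y) ∈ coradicalOfDual k A
      rw [map_add]
      exact Submodule.add_mem _ hx hy
  have heq : (g ∘ₗ φ.toLinearMap) = φ.toLinearMap.dualMap g := rfl
  rw [heq]
  exact hgoal
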